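/- Let τ be the real 3×3 matrix with rows (0,1,0), (1,0,1), (0,1,0), and for t ∈ ℝ let g_t := exp(tτ). Let D := {(v,w) ∈ ℝ³×ℝ³ : v₁+v₂+v₃ = 1, w₁+w₂+w₃ = 1, v₁w₁ − v₂w₂ + v₃w₃ = 0, and all vᵢ, wᵢ ≥ 0}. Then for every t > 0 and every (v,w) ∈ D: all entries of g_t v and of g_t w are strictly positive (in particular the coordinate sums σ(g_t v) and σ(g_t w) are positive), and the point ( g_t v / σ(g_t v), g_t w / σ(g_t w) ) lies in D and has all six coordinates strictly positive. -/

import Mathlib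

open Matrix

/-- `τ = e₁ + e₂ + f₁ + f₂` is the sum of the Chevalley generators of `sl₃(ℝ)`. -/
def tauMat : Matrix (Fin 3) (Fin 3) ℝ := !![0, 1, 0; 1, 0, 1; 0, 1, 0]

set_option maxHeartbeats 1600000 in
lemma exp_tau_eq_aux (s : ℝ) (hs : s * s = 2) (hs0 : 0 < s) (t : ℝ) :
    NormedSpace.exp (t • tauMat) =
      !![(Real.cosh (s * t) + 1) / 2, s * Real.sinh (s * t) / 2, (Real.cosh (s * t) - 1) / 2;
         s * Real.sinh (s * t) / 2, Real.cosh (s * t), s * Real.sinh (s * t) / 2;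
         (Real.cosh (s * t) - 1) / 2, s * Real.sinh (s * t) / 2, (Real.cosh (s * t) + 1) / 2] := by
  have hsne : s ≠ 0 := ne_of_gt hs0
  have hs2 : s ^ 2 = 2 := by rw [sq]; exact hs
  have hs3 : s ^ 3 = 2 * s := by rw [pow_succ, hs2]
  have hs4 : s ^ 4 = 4 := by rw [show (4:ℕ) = 2*2 from rfl, pow_mul, hs2]; norm_num
  have hPQ : (!![1, 1, 1; s, -s, 0; 1, 1, -1] : Matrix (Fin 3) (Fin 3) ℝ) *
      !![1/4, 1/(2*s), 1/4; 1/4, -(1/(2*s)), 1/4; 1/2, 0, -(1/2)] = 1 := by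
    rw [Matrix.mul_fin_three]
    ext i j
    fin_cases i <;> fin_cases j <;> simp [Matrix.one_apply] <;> field_simp <;>
      first | ring1 | linear_combination hs | linear_combination -hs | linear_combination 2*hs | linear_combination -(2*hs)
  have hQP : (!![1/4, 1/(2*s), 1/4; 1/4, -(1/(2*s)), 1/4; 1/2, 0, -(1/2)] :
      Matrix (Fin 3) (Fin 3) ℝ) * !![1, 1, 1; s, -s, 0; 1, 1, -1] = 1 := by
    rw [Matrix.mul_fin_three]
    ext i j
    fin_cases i <;> fin_cases j <;> simp [Matrix.one_apply] <;> field_simp <;>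
      first | ring1 | linear_combination hs | linear_combination -hs | linear_combination 2*hs | linear_combination -(2*hs)
  have hU : IsUnit (!![1, 1, 1; s, -s, 0; 1, 1, -1] : Matrix (Fin 3) (Fin 3) ℝ) :=
    ⟨⟨_, _, hPQ, hQP⟩, rfl⟩
  have hPinv : (!![1, 1, 1; s, -s, 0; 1, 1, -1] : Matrix (Fin 3) (Fin 3) ℝ)⁻¹ =
      !![1/4, 1/(2*s), 1/4; 1/4, -(1/(2*s)), 1/4; 1/2, 0, -(1/2)] :=
    Matrix.inv_eq_right_inv hPQ
  have hD : Matrix.diagonal ![s*t, -(s*t), 0] =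
      (!![s*t,0,0; 0,-(s*t),0; 0,0,0] : Matrix (Fin 3) (Fin 3) ℝ) := by
    ext i j
    fin_cases i <;> fin_cases j <;>
      simp [Matrix.diagonal, Matrix.vecHead, Matrix.vecTail]
  have hdecomp : t • tauMat = !![1, 1, 1; s, -s, 0; 1, 1, -1] *
      Matrix.diagonal ![s*t, -(s*t), 0] *
      (!![1, 1, 1; s, -s, 0; 1, 1, -1] : Matrix (Fin 3) (Fin 3) ℝ)⁻¹ := by
    rw [hPinv, hD, Matrix.mul_fin_three, Matrix.mul_fin_three]
    ext i j
    fin_cases i <;> fin_cases j <;> simp [tauMat] <;> field_simp <;>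
      first | ring1 | linear_combination t*hs | linear_combination -(t*hs) | linear_combination (t/2)*hs | linear_combination -((t/2)*hs) | linear_combination 2*t*hs | linear_combination -(2*t*hs)
  have hD2 : Matrix.diagonal (NormedSpace.exp ![s*t, -(s*t), 0]) =
      (!![Real.exp (s*t),0,0; 0,Real.exp (-(s*t)),0; 0,0,1] :
        Matrix (Fin 3) (Fin 3) ℝ) := by
    ext i j
    fin_cases i <;> fin_cases j <;>
      simp [Matrix.diagonal, Matrix.vecHead, Matrix.vecTail, Pi.coe_exp,
        ← Real.exp_eq_exp_ℝ]
  rw [hdecomp, Matrix.exp_conj _ _ hU, Matrix.exp_diagonal, hPinv, hD2,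
    Matrix.mul_fin_three, Matrix.mul_fin_three]
  ext i j
  fin_cases i <;> fin_cases j <;>
    simp [Real.cosh_eq, Real.sinh_eq] <;> field_simp <;> ring_nf <;>
    simp only [hs2, hs3, hs4] <;> first | rfl | ring1 | norm_num

/-- The coordinate sum `σ(x) = x₁ + x₂ + x₃` of a vector `x ∈ ℝ³`. -/
def coordSum (x : Fin 3 → ℝ) : ℝ := x 0 + x 1 + x 2

/-- The realization of the totally nonnegative part of the complete flag variety of
`SL₃(ℝ)`: pairs `(v, w) ∈ ℝ³ × ℝ³` with `σ(v) = 1`, `σ(w) = 1`,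
`v₁w₁ - v₂w₂ + v₃w₃ = 0`, and all coordinates nonnegative. -/
def tnnFlagD : Set ((Fin 3 → ℝ) × (Fin 3 → ℝ)) :=
  {p | coordSum p.1 = 1 ∧ coordSum p.2 = 1 ∧
    p.1 0 * p.2 0 - p.1 1 * p.2 1 + p.1 2 * p.2 2 = 0 ∧
    (∀ i, 0 ≤ p.1 i) ∧ (∀ i, 0 ≤ p.2 i)}

/-- For `t > 0`, the flow `(v, w) ↦ (g_t v / σ(g_t v), g_t w / σ(g_t w))` induced by
`g_t = exp(t τ)` maps the totally nonnegative part `D` into the totally positive part: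
for `(v, w) ∈ D`, all entries of `g_t v` and `g_t w` are strictly positive (in particular
`σ(g_t v) > 0` and `σ(g_t w) > 0`), and the normalized pair lies in `D` with all six
coordinates strictly positive. -/
lemma pos_comb (b0 b1 b2 : ℝ) (hb0 : 0 < b0) (hb1 : 0 < b1) (hb2 : 0 < b2)
    (x : Fin 3 → ℝ) (hx : ∀ i, 0 ≤ x i) (hx1 : coordSum x = 1) :
    0 < b0 * x 0 + b1 * x 1 + b2 * x 2 := by
  have h1 : x 0 + x 1 + x 2 = 1 := hx1
  have h : 0 < x 0 ∨ 0 < x 1 ∨ 0 < x 2 := by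
    by_contra h; push_neg at h
    have h0 := hx 0; have h1' := hx 1; have h2 := hx 2
    have := h.1; have := h.2.1; have := h.2.2
    have : x 0 = 0 := le_antisymm ‹x 0 ≤ 0› h0
    have : x 1 = 0 := le_antisymm ‹x 1 ≤ 0› h1'
    have : x 2 = 0 := le_antisymm ‹x 2 ≤ 0› h2
    simp_all
  rcases h with h | h | h
  · nlinarith [mul_pos hb0 h, mul_nonneg hb1.le (hx 1), mul_nonneg hb2.le (hx 2)]
  · nlinarith [mul_pos hb1 h, mul_nonneg hb0.le (hx 0), mul_nonneg hb2.le (hx 2)]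
  · nlinarith [mul_pos hb2 h, mul_nonneg hb0.le (hx 0), mul_nonneg hb1.le (hx 1)]

theorem exp_tau_flow_maps_tnn_into_tp :
    ∀ t : ℝ, 0 < t → ∀ v w : Fin 3 → ℝ, (v, w) ∈ tnnFlagD →
      (∀ i, 0 < (NormedSpace.exp (t • tauMat)).mulVec v i) ∧
      (∀ i, 0 < (NormedSpace.exp (t • tauMat)).mulVec w i) ∧
      0 < coordSum ((NormedSpace.exp (t • tauMat)).mulVec v) ∧
      0 < coordSum ((NormedSpace.exp (t • tauMat)).mulVec w) ∧
      ((coordSum ((NormedSpace.exp (t • tauMat)).mulVec v))⁻¹ •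
          (NormedSpace.exp (t • tauMat)).mulVec v,
        (coordSum ((NormedSpace.exp (t • tauMat)).mulVec w))⁻¹ •
          (NormedSpace.exp (t • tauMat)).mulVec w) ∈ tnnFlagD ∧
      (∀ i, 0 < (coordSum ((NormedSpace.exp (t • tauMat)).mulVec v))⁻¹ •
          (NormedSpace.exp (t • tauMat)).mulVec v i) ∧
      (∀ i, 0 < (coordSum ((NormedSpace.exp (t • tauMat)).mulVec w))⁻¹ •
          (NormedSpace.exp (t • tauMat)).mulVec w i) := by
  intro t ht v w hvw
  obtain ⟨hv1, hw1, hqvw, hv0, hw0⟩ := hvw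
  have hs : Real.sqrt 2 * Real.sqrt 2 = 2 := Real.mul_self_sqrt (by norm_num)
  have hs0 : (0:ℝ) < Real.sqrt 2 := Real.sqrt_pos.mpr (by norm_num)
  have h2 : (Real.sqrt 2) ^ 2 = 2 := by rw [sq]; exact hs
  have hE := exp_tau_eq_aux (Real.sqrt 2) hs hs0 t
  set r : ℝ := Real.sqrt 2
  set c : ℝ := Real.cosh (r * t) with hcdef
  set sh : ℝ := Real.sinh (r * t) with hshdef
  have hch : c ^ 2 - sh ^ 2 = 1 := Real.cosh_sq_sub_sinh_sq _
  have hc1 : 1 < c := by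
    rw [hcdef]
    exact Real.one_lt_cosh.mpr (ne_of_gt (mul_pos hs0 ht))
  have hshp : 0 < sh := by
    rw [hshdef]
    exact Real.sinh_pos_iff.mpr (mul_pos hs0 ht)
  have hp : 0 < (c + 1) / 2 := by linarith
  have hq : 0 < (c - 1) / 2 := by linarith
  have ha : 0 < r * sh / 2 := by positivity
  have hc0 : 0 < c := by linarith
  have hmv : ∀ u : Fin 3 → ℝ, (NormedSpace.exp (t • tauMat)).mulVec u =
      ![(c+1)/2 * u 0 + r*sh/2 * u 1 + (c-1)/2 * u 2,
        r*sh/2 * u 0 + c * u 1 + r*sh/2 * u 2,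
        (c-1)/2 * u 0 + r*sh/2 * u 1 + (c+1)/2 * u 2] := by
    intro u
    rw [hE]
    ext i
    fin_cases i <;>
      simp [Matrix.mulVec, dotProduct, Fin.sum_univ_three] <;> ring
  have key : ∀ u : Fin 3 → ℝ, (∀ i, 0 ≤ u i) → coordSum u = 1 →
      ∀ i, 0 < (NormedSpace.exp (t • tauMat)).mulVec u i := by
    intro u hu hu1 i
    rw [hmv u]
    fin_cases i
    · simpa using pos_comb _ _ _ hp ha hq u hu hu1
    · simpa using pos_comb _ _ _ ha hc0 ha u hu hu1
    · simpa using pos_comb _ _ _ hq ha hp u hu hu1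
  have hXpos := key v hv0 hv1
  have hYpos := key w hw0 hw1
  have hXsum : 0 < coordSum ((NormedSpace.exp (t • tauMat)).mulVec v) := by
    have := hXpos 0; have := hXpos 1; have := hXpos 2
    unfold coordSum; linarith
  have hYsum : 0 < coordSum ((NormedSpace.exp (t • tauMat)).mulVec w) := by
    have := hYpos 0; have := hYpos 1; have := hYpos 2
    unfold coordSum; linarith
  have hXYquad :
      ((NormedSpace.exp (t • tauMat)).mulVec v) 0 *
        ((NormedSpace.exp (t • tauMat)).mulVec w) 0 -
      ((NormedSpace.exp (t • tauMat)).mulVec v) 1 *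
        ((NormedSpace.exp (t • tauMat)).mulVec w) 1 +
      ((NormedSpace.exp (t • tauMat)).mulVec v) 2 *
        ((NormedSpace.exp (t • tauMat)).mulVec w) 2 = 0 := by
    rw [hmv v, hmv w]
    simp only [Matrix.cons_val_zero, Matrix.cons_val_one, Matrix.head_cons,
      Matrix.cons_val_two, Matrix.tail_cons]
    have hch2 : c ^ 2 - r ^ 2 * sh ^ 2 / 2 = 1 := by
      rw [h2]; linarith
    linear_combination (c ^ 2 - r ^ 2 * sh ^ 2 / 2) * hqvw +
      ((v 0 * w 2 + v 2 * w 0 - v 0 * w 0 - v 2 * w 2) / 2) * hch2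
  have hnormpos : ∀ (x : Fin 3 → ℝ), 0 < coordSum x → (∀ i, 0 < x i) →
      ∀ i, 0 < ((coordSum x)⁻¹ • x) i := by
    intro x hx hxi i
    simp only [Pi.smul_apply, smul_eq_mul]
    exact mul_pos (inv_pos.mpr hx) (hxi i)
  have hnormsum : ∀ (x : Fin 3 → ℝ), 0 < coordSum x →
      coordSum ((coordSum x)⁻¹ • x) = 1 := by
    intro x hx
    show (coordSum x)⁻¹ * x 0 + (coordSum x)⁻¹ * x 1 + (coordSum x)⁻¹ * x 2 = 1
    have hne : coordSum x ≠ 0 := ne_of_gt hx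
    have hcs : x 0 + x 1 + x 2 = coordSum x := rfl
    field_simp
    linarith [hcs]
  refine ⟨hXpos, hYpos, hXsum, hYsum, ⟨?_, ?_, ?_, ?_, ?_⟩, ?_, ?_⟩
  · exact hnormsum _ hXsum
  · exact hnormsum _ hYsum
  · show ((coordSum ((NormedSpace.exp (t • tauMat)).mulVec v))⁻¹ •
        (NormedSpace.exp (t • tauMat)).mulVec v) 0 * _ - _ + _ = 0
    simp only [Pi.smul_apply, smul_eq_mul]
    linear_combination
      ((coordSum ((NormedSpace.exp (t • tauMat)).mulVec v))⁻¹ *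
        (coordSum ((NormedSpace.exp (t • tauMat)).mulVec w))⁻¹) * hXYquad
  · intro i
    exact le_of_lt (hnormpos _ hXsum hXpos i)
  · intro i
    exact le_of_lt (hnormpos _ hYsum hYpos i)
  · exact hnormpos _ hXsum hXpos
  · exact hnormpos _ hYsum hYpos
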